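/- Let n ≥ 2, let G be a K_3-saturated subgraph of the complete balanced tripartite graph K_3^n with partite sets V_1, V_2, V_3, let i ∈ {1,2,3}, and let v ∈ V_i be a vertex of degree d in G. Then the number of edges of G joining the two partite sets other than V_i is at least 2n − d. -/

import Mathlib

open SimpleGraph

/-- The complete balanced `k`-partite graph with partite sets `V_i = {i} × Fin n`. -/
def multipartite (k n : ℕ) : SimpleGraph (Fin k × Fin n) where
  Adj u w := u.1 ≠ w.1
  symm := by first | exact fun _ _ h => h.symm | exact ⟨fun _ _ h => h.symm⟩
  loopless := ⟨fun _ h => h rfl⟩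

/-- `J` is a `K_t`-saturated subgraph of `G`. -/
def IsSatIn {V : Type*} (t : ℕ) (J G : SimpleGraph V) : Prop :=
  J ≤ G ∧ J.CliqueFree t ∧
    ∀ u w : V, G.Adj u w → ¬ J.Adj u w →
      ¬ (J ⊔ SimpleGraph.fromEdgeSet {s(u, w)}).CliqueFree t



/-- In a `K_3`-saturated subgraph of `K_3^n`, if `v ∈ V_i` has degree `d`, then at least
`2n − d` edges join the two partite sets other than `V_i`. -/
theorem stmt_11 (n : ℕ) (hn : 2 ≤ n)
    (G : SimpleGraph (Fin 3 × Fin n))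
    (hsat : IsSatIn 3 G (multipartite 3 n))
    (i : Fin 3) (v : Fin 3 × Fin n) (hv : v.1 = i)
    (d : ℕ) (hd : (G.neighborSet v).ncard = d) :
    2 * (n : ℤ) - d ≤ (({e ∈ G.edgeSet | ∀ x ∈ e, x.1 ≠ i}).ncard : ℤ) := by
  obtain ⟨hle, hfree, hsat⟩ := hsat
  set S : Set (Sym2 (Fin 3 × Fin n)) := {e ∈ G.edgeSet | ∀ x ∈ e, x.1 ≠ i} with hS
  set B : Set (Fin 3 × Fin n) := {p | p.1 ≠ i} with hB
  -- key: for each non-neighbor u of v outside V_i, there is a common neighbor w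
  have key : ∀ u : Fin 3 × Fin n, u.1 ≠ i → ¬ G.Adj v u →
      ∃ w, G.Adj v w ∧ G.Adj u w := by
    intro u hui hnadj
    have hadj : (multipartite 3 n).Adj v u := by
      show v.1 ≠ u.1; rw [hv]; exact fun h => hui h.symm
    have := hsat v u hadj hnadj
    rw [CliqueFree] at this
    push_neg at this
    obtain ⟨t, ht⟩ := this
    have hvu : v ≠ u := fun h => hui (h ▸ hv)
    -- v and u are both in t
    have hmem : v ∈ t ∧ u ∈ t := by
      by_contra hcon
      apply hfree t
      constructor
      · intro a ha b hb hab
        have := ht.1 ha hb hab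
        rcases this with h | h
        · exact h
        · exfalso
          rw [fromEdgeSet_adj] at h
          have := h.1
          simp only [Set.mem_singleton_iff, Sym2.eq_iff] at this
          rcases this with ⟨h1, h2⟩ | ⟨h1, h2⟩
          · exact hcon ⟨h1 ▸ ha, h2 ▸ hb⟩
          · exact hcon ⟨h2 ▸ hb, h1 ▸ ha⟩
      · exact ht.2
    obtain ⟨hvt, hut⟩ := hmem
    -- third vertex
    have hns : ¬ t ⊆ {v, u} := by
      intro hsub
      have := Finset.card_le_card hsub
      rw [ht.2] at this
      have : ({v, u} : Finset _).card ≤ 2 := Finset.card_insert_le _ _ |>.trans (by simp)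
      omega
    rw [Finset.not_subset] at hns
    obtain ⟨w, hwt, hw⟩ := hns
    simp only [Finset.mem_insert, Finset.mem_singleton, not_or] at hw
    obtain ⟨hwv, hwu⟩ := hw
    have adj1 : G.Adj v w := by
      have := ht.1 hvt hwt (Ne.symm hwv)
      rcases this with h | h
      · exact h
      · exfalso
        rw [fromEdgeSet_adj] at h
        have := h.1
        simp only [Set.mem_singleton_iff, Sym2.eq_iff] at this
        rcases this with ⟨h1, h2⟩ | ⟨h1, h2⟩
        · exact hwu h2
        · exact hwv h2
    have adj2 : G.Adj u w := by
      have := ht.1 hut hwt (Ne.symm hwu)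
      rcases this with h | h
      · exact h
      · exfalso
        rw [fromEdgeSet_adj] at h
        have := h.1
        simp only [Set.mem_singleton_iff, Sym2.eq_iff] at this
        rcases this with ⟨h1, h2⟩ | ⟨h1, h2⟩
        · exact hwu h2
        · exact hwv h2
    exact ⟨w, adj1, adj2⟩
  -- part of other parts: B
  have hBcard : B.ncard = 2 * n := by
    rw [hB, Set.ncard_eq_toFinset_card']
    simp only [Set.toFinset_setOf]
    rw [← Finset.univ_product_univ, Finset.filter_product_left (p := fun a => ¬ a = i),
      Finset.card_product]
    rw [show Finset.filter (fun a => ¬ a = i) Finset.univ = Finset.univ.erase i by ext; simp]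
    simp [Finset.card_erase_of_mem]
  have hNB : G.neighborSet v ⊆ B := by
    intro u hu
    have := hle hu
    simp only [multipartite, hv] at this
    exact fun h => this h.symm
  set A : Set (Fin 3 × Fin n) := B \ G.neighborSet v with hA
  have hAcard : A.ncard = 2 * n - d := by
    rw [hA, Set.ncard_diff hNB, hBcard, hd]
  have hdle : d ≤ 2 * n := by
    rw [← hd, ← hBcard]; exact Set.ncard_le_ncard hNB (Set.toFinite _)
  -- injection from A into S
  have wfun : ∀ u ∈ A, ∃ w, G.Adj v w ∧ G.Adj u w := by
    intro u hu
    exact key u hu.1 (fun h => hu.2 h)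
  choose! f hf1 hf2 using wfun
  have hmap : ∀ u ∈ A, s(u, f u) ∈ S := by
    intro u hu
    refine ⟨G.mem_edgeSet.mpr (hf2 u hu), ?_⟩
    intro x hx
    rw [Sym2.mem_iff] at hx
    rcases hx with rfl | rfl
    · exact hu.1
    · have := hle (hf1 u hu)
      simp only [multipartite, hv] at this
      exact fun h => this h.symm
  have hinj : Set.InjOn (fun u => s(u, f u)) A := by
    intro a ha b hb hab
    simp only [Sym2.eq_iff] at hab
    rcases hab with ⟨h1, h2⟩ | ⟨h1, h2⟩
    · exact h1
    · exfalso
      exact ha.2 (show G.Adj v a by rw [h1]; exact hf1 b hb)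
  have hle' : A.ncard ≤ S.ncard :=
    Set.ncard_le_ncard_of_injOn _ hmap hinj (Set.toFinite _)
  rw [hAcard] at hle'
  have := hle'
  push_cast
  omega
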